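/- Let k be a commutative ring and let M be an OI-module over k such that M_0 = M(∅) is a finitely generated k-module and the reduced shift Σ̄(M) is a finitely generated OI-module. Then M is a finitely generated OI-module. -/

import Mathlib

open CategoryTheory

universe u

/-- The (skeletal model of the) category `OI` of finite totally ordered sets and
order-preserving injections: the object `n` represents `[n] = {1, …, n}`, and a
morphism `n ⟶ m` is an order-preserving injection `Fin n ↪o Fin m`. -/
def OI : Type := ℕ

namespace OI

/-- Build an object of `OI` from a natural number. -/
def mk (n : ℕ) : OI := n

/-- The underlying natural number of an object of `OI`. -/
def len (n : OI) : ℕ := n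

instance : Category OI where
  Hom n m := Fin n.len ↪o Fin m.len
  id _ := RelEmbedding.refl _
  comp f g := f.trans g
  id_comp _ := rfl
  comp_id _ := rfl
  assoc _ _ _ := rfl

/-- The order embedding underlying a morphism of `OI`. -/
def emb {n m : OI} (f : n ⟶ m) : Fin n.len ↪o Fin m.len := f

@[ext]
theorem hom_ext {n m : OI} (f g : n ⟶ m) (h : ∀ i, emb f i = emb g i) : f = g :=
  RelEmbedding.ext h

end OI

/-- A module over a category `C` (a functor `C ⥤ Mod_k`) is finitely generated if there
are finitely many elements `mᵢ ∈ M xᵢ` whose images under all morphisms span every `M y`;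
equivalently, `M` is a quotient of a finite direct sum of principal projectives. -/
def CatModule.FG {C : Type*} [Category C] {k : Type u} [CommRing k]
    (M : C ⥤ ModuleCat.{u} k) : Prop :=
  ∃ (r : ℕ) (x : Fin r → C) (m : ∀ i, M.obj (x i)),
    ∀ y : C, Submodule.span k
      {v : M.obj y | ∃ (i : Fin r) (f : x i ⟶ y), M.map f (m i) = v} = ⊤

namespace OI

/-- Extend an order embedding `Fin n ↪o Fin m` to `Fin (n+1) ↪o Fin (m+1)` by sending the
new maximal element to the new maximal element. -/
def extendTop {n m : ℕ} (f : Fin n ↪o Fin m) : Fin (n + 1) ↪o Fin (m + 1) :=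
  OrderEmbedding.ofStrictMono
    (fun i => if h : (i : ℕ) < n then (f ⟨i, h⟩).castSucc else Fin.last m)
    (by
      intro i j hij
      by_cases hi : (i : ℕ) < n
      · by_cases hj : (j : ℕ) < n
        · simp only [dif_pos hi, dif_pos hj]
          exact Fin.castSucc_lt_castSucc_iff.mpr (f.strictMono hij)
        · simp only [dif_pos hi, dif_neg hj]
          exact Fin.castSucc_lt_last _
      · exfalso
        have h1 : (i : ℕ) < (j : ℕ) := hij
        have h2 : (j : ℕ) < n + 1 := j.isLt
        omega)

theorem extendTop_apply {n m : ℕ} (f : Fin n ↪o Fin m) (i : Fin (n + 1)) :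
    extendTop f i =
      if h : (i : ℕ) < n then (f ⟨i, h⟩).castSucc else Fin.last m := rfl

/-- The shift endofunctor `Σ₀` of `OI`, `S ↦ S ⊔ {∞}` with `∞` a new maximal element. -/
def shiftFunctor : OI ⥤ OI where
  obj n := OI.mk (n.len + 1)
  map f := extendTop (OI.emb f)
  map_id n := by
    apply OI.hom_ext
    intro i
    show extendTop (OI.emb (𝟙 n)) i = i
    rw [extendTop_apply (OI.emb (𝟙 n)) i]
    split_ifs with h
    · exact Fin.ext rfl
    · have h2 : (i : ℕ) < n.len + 1 := i.isLt
      exact Fin.ext (by simp only [Fin.val_last]; omega)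
  map_comp {a b c} f g := by
    apply OI.hom_ext
    intro i
    show extendTop (OI.emb (f ≫ g)) i = extendTop (OI.emb g) (extendTop (OI.emb f) i)
    by_cases h : (i : ℕ) < a.len
    · have h2 : (((OI.emb f) ⟨i, h⟩).castSucc : ℕ) < b.len := by
        simpa using ((OI.emb f) ⟨i, h⟩).isLt
      have e1 : extendTop (OI.emb f) i = ((OI.emb f) ⟨i, h⟩).castSucc :=
        (extendTop_apply _ _).trans (dif_pos h)
      conv_lhs => rw [(extendTop_apply (OI.emb (f ≫ g)) i).trans (dif_pos h)]
      conv_rhs => rw [e1, extendTop_apply, dif_pos h2]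
      exact congrArg Fin.castSucc (congrArg (OI.emb g) (Fin.ext (by simp [OI.emb])))
    · have e1 : extendTop (OI.emb f) i = Fin.last b.len :=
        (extendTop_apply _ _).trans (dif_neg h)
      have h2 : ¬ (((Fin.last b.len) : Fin (b.len + 1)) : ℕ) < b.len := by simp
      conv_lhs => rw [(extendTop_apply (OI.emb (f ≫ g)) i).trans (dif_neg h)]
      conv_rhs => rw [e1, extendTop_apply, dif_neg h2]

/-- The inclusion `S ↪ S ⊔ {∞}`, as a morphism in `OI`. -/
def inclTop (n : OI) : n ⟶ shiftFunctor.obj n :=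
  (Fin.castSuccOrderEmb : Fin n.len ↪o Fin (n.len + 1))

theorem inclTop_natural {a b : OI} (f : a ⟶ b) :
    f ≫ inclTop b = inclTop a ≫ shiftFunctor.map f := by
  apply OI.hom_ext
  intro i
  show Fin.castSucc (OI.emb f i) = extendTop (OI.emb f) (Fin.castSucc i)
  have h : ((i.castSucc : Fin (a.len + 1)) : ℕ) < a.len := by simpa using i.isLt
  rw [extendTop_apply, dif_pos h]
  exact congrArg Fin.castSucc (congrArg (OI.emb f) (Fin.ext (by simp)))

/-- For an `OI`-module `M`, the natural map `M ⟶ Σ(M)` induced by the inclusions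
`S ↪ S ⊔ {∞}`; the reduced shift `Σ̄(M)` is its cokernel. -/
def shiftUnit {k : Type u} [CommRing k] (M : OI ⥤ ModuleCat.{u} k) :
    M ⟶ shiftFunctor ⋙ M where
  app n := M.map (inclTop n)
  naturality a b f := by
    show M.map f ≫ M.map (inclTop b) = M.map (inclTop a) ≫ M.map (shiftFunctor.map f)
    rw [← M.map_comp, ← M.map_comp, inclTop_natural]

end OI

open CategoryTheory.Limits


section Proof

open CategoryTheory.Limits

lemma moduleCat_comp_apply {k : Type u} [CommRing k] {A B C : ModuleCat.{u} k}
    (f : A ⟶ B) (g : B ⟶ C) (x : A) : (f ≫ g) x = g (f x) := rfl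

variable {k : Type u} [CommRing k] (M : OI ⥤ ModuleCat.{u} k)

lemma pi_app_surjective (y : OI) :
    Function.Surjective ((cokernel.π (OI.shiftUnit M)).app y) := by
  let G := (evaluation OI (ModuleCat.{u} k)).obj y
  have h : cokernel.π (G.map (OI.shiftUnit M)) ≫ cokernelComparison (OI.shiftUnit M) G
      = (cokernel.π (OI.shiftUnit M)).app y := π_comp_cokernelComparison _ _
  rw [← h]
  have h1 : Function.Surjective (cokernel.π (G.map (OI.shiftUnit M))) :=
    (ModuleCat.epi_iff_surjective _).1 inferInstance
  have h2 : Function.Surjective (cokernelComparison (OI.shiftUnit M) G) :=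
    (ModuleCat.epi_iff_surjective _).1 inferInstance
  intro v
  obtain ⟨u, hu⟩ := h2 v
  obtain ⟨w, hw⟩ := h1 u
  refine ⟨w, ?_⟩
  erw [moduleCat_comp_apply, hw, hu]

lemma pi_app_ker {y : OI} (v : M.obj (OI.shiftFunctor.obj y))
    (hv : (cokernel.π (OI.shiftUnit M)).app y v = 0) :
    ∃ w, M.map (OI.inclTop y) w = v := by
  let G := (evaluation OI (ModuleCat.{u} k)).obj y
  have h : cokernel.π (G.map (OI.shiftUnit M)) ≫ cokernelComparison (OI.shiftUnit M) G
      = (cokernel.π (OI.shiftUnit M)).app y := π_comp_cokernelComparison _ _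
  have hinj : Function.Injective (cokernelComparison (OI.shiftUnit M) G) :=
    (ModuleCat.mono_iff_injective _).1 inferInstance
  have h0 : cokernel.π (G.map (OI.shiftUnit M)) v = 0 := by
    apply hinj
    have h' := ConcreteCategory.congr_hom h v
    rw [moduleCat_comp_apply] at h'
    rw [h']; erw [hv]; rw [map_zero]
  have hq := ConcreteCategory.congr_hom
    (ModuleCat.cokernel_π_cokernelIsoRangeQuotient_hom (f := G.map (OI.shiftUnit M))) v
  rw [moduleCat_comp_apply, h0, map_zero] at hq
  have hmem : v ∈ LinearMap.range (G.map (OI.shiftUnit M)).hom := by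
    rw [← Submodule.Quotient.mk_eq_zero]
    exact hq.symm
  obtain ⟨w, hw⟩ := hmem
  exact ⟨w, hw⟩

end Proof

/-- Let `k` be a commutative ring and `M` an `OI`-module over `k` such that `M ∅` is a
finitely generated `k`-module and the reduced shift `Σ̄(M)` (the cokernel of the natural
map `M ⟶ Σ(M)`) is a finitely generated `OI`-module.  Then `M` is finitely generated. -/
theorem oi_module_fg_of_reducedShift_fg {k : Type u} [CommRing k]
    (M : OI ⥤ ModuleCat.{u} k) (h0 : Module.Finite k (M.obj (OI.mk 0)))
    (hshift : CatModule.FG (cokernel (OI.shiftUnit M))) :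
    CatModule.FG M := by
  classical
  obtain ⟨n0, g, hg⟩ := Module.Finite.exists_fin (R := k) (M := M.obj (OI.mk 0))
  obtain ⟨r, x, m, hm⟩ := hshift
  have hlift : ∀ i, ∃ w : M.obj (OI.shiftFunctor.obj (x i)),
      (cokernel.π (OI.shiftUnit M)).app (x i) w = m i := fun i =>
    pi_app_surjective M (x i) (m i)
  choose m' hm' using hlift
  have key : ∀ n : ℕ, ∀ v : M.obj (OI.mk n), v ∈ Submodule.span k
      {v : M.obj (OI.mk n) | (∃ j f, M.map f (g j) = v) ∨
        (∃ (i : Fin r) (f : OI.shiftFunctor.obj (x i) ⟶ OI.mk n), M.map f (m' i) = v)} := by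
    intro n
    induction n with
    | zero =>
      intro v
      have hv : v ∈ Submodule.span k (Set.range g) := hg ▸ Submodule.mem_top
      refine Submodule.span_mono ?_ hv
      rintro _ ⟨j, rfl⟩
      exact Or.inl ⟨j, 𝟙 _, by simp⟩
    | succ n ih =>
      intro v
      set N := Submodule.span k
        {v : M.obj (OI.mk (n+1)) | (∃ j f, M.map f (g j) = v) ∨
          (∃ (i : Fin r) (f : OI.shiftFunctor.obj (x i) ⟶ OI.mk (n+1)),
            M.map f (m' i) = v)} with hN
      have hπv : (cokernel.π (OI.shiftUnit M)).app (OI.mk n) v ∈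
          Submodule.map ((cokernel.π (OI.shiftUnit M)).app (OI.mk n)).hom N := by
        have htop := hm (OI.mk n)
        have hv : (cokernel.π (OI.shiftUnit M)).app (OI.mk n) v ∈
            Submodule.span k {w : (cokernel (OI.shiftUnit M)).obj (OI.mk n) |
              ∃ i f, (cokernel (OI.shiftUnit M)).map f (m i) = w} := htop ▸ Submodule.mem_top
        refine Submodule.span_le.mpr ?_ hv
        rintro _ ⟨i, f, rfl⟩
        refine ⟨M.map (OI.shiftFunctor.map f) (m' i), ?_, ?_⟩
        · exact (Submodule.subset_span (Or.inr ⟨i, OI.shiftFunctor.map f, rfl⟩) :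
            M.map (OI.shiftFunctor.map f) (m' i) ∈ N)
        · have hnat := ConcreteCategory.congr_hom ((cokernel.π (OI.shiftUnit M)).naturality f) (m' i)
          rw [moduleCat_comp_apply, moduleCat_comp_apply] at hnat
          have : (OI.shiftFunctor ⋙ M).map f (m' i) = M.map (OI.shiftFunctor.map f) (m' i) := rfl
          rw [this] at hnat
          erw [hnat, hm' i]
      obtain ⟨(u : M.obj (OI.mk (n+1))), huN, huv⟩ := hπv
      have hdiff : (cokernel.π (OI.shiftUnit M)).app (OI.mk n) (v - u) = 0 := by
        have e := map_sub (ConcreteCategory.hom ((cokernel.π (OI.shiftUnit M)).app (OI.mk n))) v u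
        erw [e, ← huv]; exact sub_self _
      obtain ⟨w, hw⟩ := pi_app_ker M (v - u) hdiff
      have hwmem := ih w
      have himg : M.map (OI.inclTop (OI.mk n)) w ∈ N := by
        have hmap := Submodule.mem_map_of_mem (f := (M.map (OI.inclTop (OI.mk n))).hom) hwmem
        rw [Submodule.map_span] at hmap
        refine Submodule.span_mono (M := M.obj (OI.mk (n+1))) ?_ hmap
        rintro _ ⟨s, hs, rfl⟩
        rcases hs with ⟨j, f, rfl⟩ | ⟨i, f, rfl⟩
        · refine Or.inl ⟨j, f ≫ OI.inclTop (OI.mk n), ?_⟩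
          exact ConcreteCategory.congr_hom (M.map_comp _ _) _
        · refine Or.inr ⟨i, f ≫ OI.inclTop (OI.mk n), ?_⟩
          exact ConcreteCategory.congr_hom (M.map_comp _ _) _
      have hvu : v = (v - u) + u := by abel
      rw [hvu, ← hw]
      exact N.add_mem himg huN
  refine ⟨n0 + r, fun i => (Fin.addCases (motive := fun _ => Σ c : OI, M.obj c)
      (fun j => ⟨OI.mk 0, g j⟩) (fun j => ⟨OI.shiftFunctor.obj (x j), m' j⟩) i).1,
    fun i => (Fin.addCases (motive := fun _ => Σ c : OI, M.obj c)
      (fun j => ⟨OI.mk 0, g j⟩) (fun j => ⟨OI.shiftFunctor.obj (x j), m' j⟩) i).2, ?_⟩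
  intro y
  rw [eq_top_iff]
  intro v _
  have hv := key y.len v
  refine Submodule.span_mono ?_ hv
  rintro s (⟨j, f, rfl⟩ | ⟨i, f, rfl⟩)
  · refine ⟨Fin.castAdd r j, ?_⟩
    beta_reduce
    rw [Fin.addCases_left]
    exact ⟨f, rfl⟩
  · refine ⟨Fin.natAdd n0 i, ?_⟩
    beta_reduce
    rw [Fin.addCases_right]
    exact ⟨f, rfl⟩
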